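/- Let t_n = |S_n(123, 3214, 2143)| be the number of permutations of {1,...,n} avoiding the patterns 123, 3214 and 2143. Then t_1 = 1, t_2 = 2, and t_n = 2t_{n-1} + t_{n-2} for n ≥ 3. -/

import Mathlib

/-- A finite permutation: a length `n` together with a permutation of `{1,…,n}`
(modelled as `Fin n`). -/
def PermSeq : Type := Σ n : ℕ, Equiv.Perm (Fin n)

/-- `PermContains π ρ` : the permutation `π` is contained in `ρ` (written `π ≺ ρ`),
i.e. `ρ`, viewed as a sequence, has a subsequence order-isomorphic to `π`. -/
def PermContains {m n : ℕ} (π : Equiv.Perm (Fin m)) (ρ : Equiv.Perm (Fin n)) : Prop :=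
  ∃ f : Fin m → Fin n, StrictMono f ∧ ∀ i j : Fin m, π i < π j ↔ ρ (f i) < ρ (f j)

/-- Containment as a relation on `PermSeq`. -/
def PermLE (σ τ : PermSeq) : Prop := PermContains σ.2 τ.2

/-- A closed permutation class: downward closed under containment. -/
def IsCPC (X : Set PermSeq) : Prop := ∀ σ ∈ X, ∀ π : PermSeq, PermLE π σ → π ∈ X

/-- `countIn X n = |X ∩ S_n|`. -/
noncomputable def countIn (X : Set PermSeq) (n : ℕ) : ℕ := {π ∈ X | π.1 = n}.ncard

/-- The permutation order-isomorphic to the sequence `f` (the standardization of `f`):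
for injective `f`, it sends each position to the rank of its value. -/
noncomputable def toPerm {n : ℕ} (f : Fin n → ℕ) : Equiv.Perm (Fin n) := (Tuple.sort f)⁻¹

/-- One-line notation of the permutation `μ_{2k+5}` of Atkinson, Murphy and Ruškuc:
`2k+2, 2k+5, 2k+4`, then the interleaving `2k, 2k+3, 2k-2, 2k+1, …, 6, 9, 4, 7`,
then `1, 5, 3, 2` (e.g. `μ_7 = 4,7,6,1,5,3,2`). Positions are `0`-indexed here. -/
def muFun (k : ℕ) : Fin (2 * k + 5) → ℕ := fun i =>
  if i.val = 0 then 2 * k + 2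
  else if i.val = 1 then 2 * k + 5
  else if i.val = 2 then 2 * k + 4
  else if i.val = 2 * k + 1 then 1
  else if i.val = 2 * k + 2 then 5
  else if i.val = 2 * k + 3 then 3
  else if i.val = 2 * k + 4 then 2
  else if i.val % 2 = 1 then 2 * k - (i.val - 3)
  else 2 * k + 3 - (i.val - 4)

/-- The permutation `μ_{2k+5}`. -/
noncomputable def muPerm (k : ℕ) : Equiv.Perm (Fin (2 * k + 5)) := toPerm (muFun k)

/-- `μ_{2k+5}` as an element of `PermSeq`. -/
noncomputable def mu (k : ℕ) : PermSeq := ⟨2 * k + 5, muPerm k⟩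

/-- The infinite antichain `U = {μ_7, μ_9, μ_11, …}`. -/
noncomputable def Uset : Set PermSeq := {π | ∃ k : ℕ, 1 ≤ k ∧ π = mu k}

/-- The permutation `123`. -/
noncomputable def p123 : PermSeq := ⟨3, toPerm ![1, 2, 3]⟩

/-- The permutation `3214`. -/
noncomputable def p3214 : PermSeq := ⟨4, toPerm ![3, 2, 1, 4]⟩

/-- The permutation `2143`. -/
noncomputable def p2143 : PermSeq := ⟨4, toPerm ![2, 1, 4, 3]⟩

/-- The permutation `15432`. -/
noncomputable def p15432 : PermSeq := ⟨5, toPerm ![1, 5, 4, 3, 2]⟩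

/-- `ρ` avoids every permutation in `Y`. -/
def AvoidsAll (Y : Set PermSeq) (ρ : PermSeq) : Prop := ∀ π ∈ Y, ¬ PermLE π ρ

/-- The class `S(Y)` of all permutations containing no member of `Y`. -/
def SClass (Y : Set PermSeq) : Set PermSeq := {ρ | AvoidsAll Y ρ}

/-- `s_n = |S_n(123, 3214, 2143, 15432)|`. -/
noncomputable def sCount (n : ℕ) : ℕ :=
  {ρ : PermSeq | ρ.1 = n ∧ AvoidsAll {p123, p3214, p2143, p15432} ρ}.ncard

/-- `t_n = |S_n(123, 3214, 2143)|`. -/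
noncomputable def tCount (n : ℕ) : ℕ :=
  {ρ : PermSeq | ρ.1 = n ∧ AvoidsAll {p123, p3214, p2143} ρ}.ncard

namespace AMR


lemma toPerm_lt_iff {n : ℕ} (f : Fin n → ℕ) (hf : Function.Injective f) (i j : Fin n) :
    toPerm f i < toPerm f j ↔ f i < f j := by
  have hm : StrictMono (f ∘ Tuple.sort f) :=
    (Tuple.monotone_sort f).strictMono_of_injective (hf.comp (Tuple.sort f).injective)
  have h : ∀ a, f a = (f ∘ Tuple.sort f) ((Tuple.sort f)⁻¹ a) := by intro a; simp
  rw [h i, h j]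
  exact (hm.lt_iff_lt).symm

lemma permContains_iff {k n : ℕ} (p : Fin k → ℕ) (hp : Function.Injective p)
    (σ : Equiv.Perm (Fin n)) :
    PermContains (toPerm p) σ ↔
      ∃ F : Fin k → Fin n, StrictMono F ∧ ∀ i j, p i < p j ↔ σ (F i) < σ (F j) := by
  unfold PermContains
  refine exists_congr fun F => and_congr_right fun _ => ?_
  refine forall_congr' fun i => forall_congr' fun j => ?_
  rw [toPerm_lt_iff p hp]

def Pat123 {n : ℕ} (f : Fin n → Fin n) : Prop :=
  ∃ i j k : Fin n, i < j ∧ j < k ∧ f i < f j ∧ f j < f k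

def Pat3214 {n : ℕ} (f : Fin n → Fin n) : Prop :=
  ∃ i j k l : Fin n, i < j ∧ j < k ∧ k < l ∧ f k < f j ∧ f j < f i ∧ f i < f l

def Pat2143 {n : ℕ} (f : Fin n → Fin n) : Prop :=
  ∃ i j k l : Fin n, i < j ∧ j < k ∧ k < l ∧ f j < f i ∧ f i < f l ∧ f l < f k

def Av {n : ℕ} (f : Fin n → Fin n) : Prop := ¬ Pat123 f ∧ ¬ Pat3214 f ∧ ¬ Pat2143 f

lemma strictMono_vec3 {α : Type*} [Preorder α] {a b c : α} (hab : a < b) (hbc : b < c) :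
    StrictMono ![a, b, c] := by
  intro x y hxy
  fin_cases x <;> fin_cases y <;>
    first
      | exact absurd hxy (by decide)
      | exact hab
      | exact hbc
      | exact hab.trans hbc

lemma strictMono_vec4 {α : Type*} [Preorder α] {a b c d : α}
    (hab : a < b) (hbc : b < c) (hcd : c < d) : StrictMono ![a, b, c, d] := by
  intro x y hxy
  fin_cases x <;> fin_cases y <;>
    first
      | exact absurd hxy (by decide)
      | exact hab
      | exact hbc
      | exact hcd
      | exact hab.trans hbc
      | exact hbc.trans hcd
      | exact (hab.trans hbc).trans hcd

lemma contains123_iff {n : ℕ} (σ : Equiv.Perm (Fin n)) :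
    PermContains (toPerm ![1, 2, 3]) σ ↔ Pat123 ⇑σ := by
  rw [permContains_iff _ (by decide)]
  constructor
  · rintro ⟨F, hF, h⟩
    exact ⟨F 0, F 1, F 2, hF (by decide), hF (by decide),
      (h 0 1).mp (by norm_num), (h 1 2).mp (by decide)⟩
  · rintro ⟨i, j, k, hij, hjk, h1, h2⟩
    refine ⟨![i, j, k], strictMono_vec3 hij hjk, ?_⟩
    simp only [Fin.lt_def] at h1 h2
    simp only [Fin.forall_fin_succ, Matrix.cons_val_zero, Matrix.cons_val_succ, Fin.lt_def,
      IsEmpty.forall_iff, and_true]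
    norm_num
    omega

lemma contains3214_iff {n : ℕ} (σ : Equiv.Perm (Fin n)) :
    PermContains (toPerm ![3, 2, 1, 4]) σ ↔ Pat3214 ⇑σ := by
  rw [permContains_iff _ (by decide)]
  constructor
  · rintro ⟨F, hF, h⟩
    exact ⟨F 0, F 1, F 2, F 3, hF (by decide), hF (by decide), hF (by decide),
      (h 2 1).mp (by decide), (h 1 0).mp (by norm_num), (h 0 3).mp (by decide)⟩
  · rintro ⟨i, j, k, l, hij, hjk, hkl, h1, h2, h3⟩
    refine ⟨![i, j, k, l], strictMono_vec4 hij hjk hkl, ?_⟩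
    simp only [Fin.lt_def] at h1 h2 h3
    simp only [Fin.forall_fin_succ, Matrix.cons_val_zero, Matrix.cons_val_succ, Fin.lt_def,
      IsEmpty.forall_iff, and_true]
    norm_num
    omega

lemma contains2143_iff {n : ℕ} (σ : Equiv.Perm (Fin n)) :
    PermContains (toPerm ![2, 1, 4, 3]) σ ↔ Pat2143 ⇑σ := by
  rw [permContains_iff _ (by decide)]
  constructor
  · rintro ⟨F, hF, h⟩
    exact ⟨F 0, F 1, F 2, F 3, hF (by decide), hF (by decide), hF (by decide),
      (h 1 0).mp (by norm_num), (h 0 3).mp (by decide), (h 3 2).mp (by decide)⟩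
  · rintro ⟨i, j, k, l, hij, hjk, hkl, h1, h2, h3⟩
    refine ⟨![i, j, k, l], strictMono_vec4 hij hjk hkl, ?_⟩
    simp only [Fin.lt_def] at h1 h2 h3
    simp only [Fin.forall_fin_succ, Matrix.cons_val_zero, Matrix.cons_val_succ, Fin.lt_def,
      IsEmpty.forall_iff, and_true]
    norm_num
    omega

lemma avoidsAll_iff {n : ℕ} (σ : Equiv.Perm (Fin n)) :
    AvoidsAll {p123, p3214, p2143} ⟨n, σ⟩ ↔ Av ⇑σ := by
  unfold AvoidsAll Av
  constructor
  · intro h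
    refine ⟨?_, ?_, ?_⟩
    · intro hp; exact h p123 (by simp) ((contains123_iff σ).mpr hp)
    · intro hp; exact h p3214 (by simp) ((contains3214_iff σ).mpr hp)
    · intro hp; exact h p2143 (by simp) ((contains2143_iff σ).mpr hp)
  · rintro ⟨h1, h2, h3⟩ π hπ hle
    simp only [Set.mem_insert_iff, Set.mem_singleton_iff] at hπ
    rcases hπ with rfl | rfl | rfl
    · exact h1 ((contains123_iff σ).mp hle)
    · exact h2 ((contains3214_iff σ).mp hle)
    · exact h3 ((contains2143_iff σ).mp hle)


variable {m : ℕ}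

@[simp] lemma last_lt_castSucc_iff {n : ℕ} (x : Fin n) : (Fin.last n < x.castSucc) ↔ False :=
  iff_false_intro (Fin.castSucc_lt_last x).asymm

@[simp] lemma last_eq_castSucc_iff {n : ℕ} (x : Fin n) : (Fin.last n = x.castSucc) ↔ False :=
  iff_false_intro (Fin.castSucc_lt_last x).ne'

@[simp] lemma castSucc_eq_last_iff {n : ℕ} (x : Fin n) : (x.castSucc = Fin.last n) ↔ False :=
  iff_false_intro (Fin.castSucc_lt_last x).ne

@[simp] lemma one_lt_succ_succ {n : ℕ} (a : Fin n) : (1 : Fin (n+2)) < a.succ.succ := by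
  simp only [Fin.lt_def, Fin.val_one, Fin.val_succ]
  omega


lemma two_eq_succ_succ {n : ℕ} : (2 : Fin (n+3)) = Fin.succ (Fin.succ 0) := by
  apply Fin.ext
  simp [Fin.val_two]

lemma one_eq_succ_zero {n : ℕ} : (1 : Fin (n+2)) = Fin.succ 0 := by
  apply Fin.ext
  simp

@[simp] lemma cons_one {n : ℕ} {α : Type} (a b : α) (g : Fin n → α) :
    (Fin.cons a (Fin.cons b g) : Fin (n+2) → α) 1 = b := by
  rw [one_eq_succ_zero, Fin.cons_succ, Fin.cons_zero]

@[simp] lemma cons_two {n : ℕ} {α : Type} (a b c : α) (g : Fin n → α) :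
    (Fin.cons a (Fin.cons b (Fin.cons c g)) : Fin (n+3) → α) 2 = c := by
  rw [two_eq_succ_succ, Fin.cons_succ, Fin.cons_succ, Fin.cons_zero]

@[simp] lemma zero_lt_two' {n : ℕ} : (0 : Fin (n+3)) < 2 := by
  rw [two_eq_succ_succ]; exact Fin.succ_pos _

@[simp] lemma one_lt_two' {n : ℕ} : (1 : Fin (n+3)) < 2 := by
  rw [two_eq_succ_succ, one_eq_succ_zero, Fin.succ_lt_succ_iff]; exact Fin.succ_pos _

@[simp] lemma two_lt_succ3 {n : ℕ} (a : Fin n) : (2 : Fin (n+3)) < a.succ.succ.succ := by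
  rw [two_eq_succ_succ, Fin.succ_lt_succ_iff, Fin.succ_lt_succ_iff]; exact Fin.succ_pos _

@[simp] lemma not_succ3_lt_two {n : ℕ} (a : Fin n) :
    (a.succ.succ.succ < (2 : Fin (n+3))) ↔ False := by
  rw [two_eq_succ_succ, Fin.succ_lt_succ_iff, Fin.succ_lt_succ_iff]
  exact iff_false_intro (Fin.not_lt_zero _)

@[simp] lemma not_two_lt_one {n : ℕ} : ((2 : Fin (n+3)) < 1) ↔ False := by
  rw [two_eq_succ_succ, show (1 : Fin (n+3)) = Fin.succ 0 from one_eq_succ_zero,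
    Fin.succ_lt_succ_iff]
  exact iff_false_intro (Fin.not_lt_zero _)

@[simp] lemma not_two_lt_zero {n : ℕ} : ((2 : Fin (n+3)) < 0) ↔ False :=
  iff_false_intro (Fin.not_lt_zero _)

@[simp] lemma not_succ2_lt_one {n : ℕ} (a : Fin n) :
    (a.succ.succ < (1 : Fin (n+2))) ↔ False := by
  rw [one_eq_succ_zero, Fin.succ_lt_succ_iff]
  exact iff_false_intro (Fin.not_lt_zero _)

def ins0 (σ : Fin (m+2) → Fin (m+2)) : Fin (m+3) → Fin (m+3) :=
  Fin.cons (Fin.last (m+2)) (fun j => (σ j).castSucc)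

def ins1 (σ : Fin (m+2) → Fin (m+2)) : Fin (m+3) → Fin (m+3) :=
  Fin.cons ((σ 0).castSucc)
    (Fin.cons (Fin.last (m+2)) (fun j => (σ j.succ).castSucc))

def ins2 (σ : Fin (m+1) → Fin (m+1)) : Fin (m+3) → Fin (m+3) :=
  Fin.cons ((Fin.last (m+1)).castSucc)
    (Fin.cons ((σ 0).castSucc.castSucc)
      (Fin.cons (Fin.last (m+2)) (fun j => (σ j.succ).castSucc.castSucc)))

def g1 : Fin (m+2) → Fin (m+3) := Fin.cases 0 (fun i => i.succ.succ)

def g2 : Fin (m+1) → Fin (m+3) := Fin.cases (Fin.succ 0) (fun i => i.succ.succ.succ)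

lemma g1_lt {i j : Fin (m+2)} (h : i < j) : g1 i < g1 j := by
  rcases Fin.eq_zero_or_eq_succ i with rfl | ⟨i, rfl⟩ <;>
    rcases Fin.eq_zero_or_eq_succ j with rfl | ⟨j, rfl⟩ <;>
    simp_all [g1, Fin.succ_lt_succ_iff]

lemma g2_lt {i j : Fin (m+1)} (h : i < j) : g2 i < g2 j := by
  rcases Fin.eq_zero_or_eq_succ i with rfl | ⟨i, rfl⟩ <;>
    rcases Fin.eq_zero_or_eq_succ j with rfl | ⟨j, rfl⟩ <;>
    simp_all [g2, Fin.succ_lt_succ_iff]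
  all_goals simp [g2, Fin.lt_def]

lemma ins1_g1 (σ : Fin (m+2) → Fin (m+2)) (i : Fin (m+2)) :
    ins1 σ (g1 i) = (σ i).castSucc := by
  rcases Fin.eq_zero_or_eq_succ i with rfl | ⟨i, rfl⟩ <;> simp [g1, ins1]

lemma ins2_g2 (σ : Fin (m+1) → Fin (m+1)) (i : Fin (m+1)) :
    ins2 σ (g2 i) = (σ i).castSucc.castSucc := by
  rcases Fin.eq_zero_or_eq_succ i with rfl | ⟨i, rfl⟩ <;> simp [g2, ins2]

section PatIff
variable (σ : Fin (m+2) → Fin (m+2)) (τ : Fin (m+1) → Fin (m+1))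

lemma pat123_ins0_iff : Pat123 (ins0 σ) ↔ Pat123 σ := by
  constructor
  · rintro ⟨i, j, k, hij, hjk, h1, h2⟩
    rcases Fin.eq_zero_or_eq_succ i with rfl | ⟨i, rfl⟩ <;>
      rcases Fin.eq_zero_or_eq_succ j with rfl | ⟨j, rfl⟩ <;>
      rcases Fin.eq_zero_or_eq_succ k with rfl | ⟨k, rfl⟩ <;>
      simp_all [ins0, Fin.succ_lt_succ_iff, Fin.castSucc_lt_castSucc_iff] <;>
      exact ⟨i, j, k, hij, hjk, h1, h2⟩
  · rintro ⟨i, j, k, hij, hjk, h1, h2⟩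
    exact ⟨i.succ, j.succ, k.succ, by simpa [Fin.succ_lt_succ_iff],
      by simpa [Fin.succ_lt_succ_iff],
      by simpa [ins0, Fin.castSucc_lt_castSucc_iff],
      by simpa [ins0, Fin.castSucc_lt_castSucc_iff]⟩

lemma pat3214_ins0_iff : Pat3214 (ins0 σ) ↔ Pat3214 σ := by
  constructor
  · rintro ⟨i, j, k, l, hij, hjk, hkl, h1, h2, h3⟩
    rcases Fin.eq_zero_or_eq_succ i with rfl | ⟨i, rfl⟩ <;>
      rcases Fin.eq_zero_or_eq_succ j with rfl | ⟨j, rfl⟩ <;>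
      rcases Fin.eq_zero_or_eq_succ k with rfl | ⟨k, rfl⟩ <;>
      rcases Fin.eq_zero_or_eq_succ l with rfl | ⟨l, rfl⟩ <;>
      simp_all [ins0, Fin.succ_lt_succ_iff, Fin.castSucc_lt_castSucc_iff] <;>
      exact ⟨i, j, k, l, hij, hjk, hkl, h1, h2, h3⟩
  · rintro ⟨i, j, k, l, hij, hjk, hkl, h1, h2, h3⟩
    exact ⟨i.succ, j.succ, k.succ, l.succ, by simpa [Fin.succ_lt_succ_iff],
      by simpa [Fin.succ_lt_succ_iff], by simpa [Fin.succ_lt_succ_iff],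
      by simpa [ins0, Fin.castSucc_lt_castSucc_iff],
      by simpa [ins0, Fin.castSucc_lt_castSucc_iff],
      by simpa [ins0, Fin.castSucc_lt_castSucc_iff]⟩

lemma pat2143_ins0_iff : Pat2143 (ins0 σ) ↔ Pat2143 σ := by
  constructor
  · rintro ⟨i, j, k, l, hij, hjk, hkl, h1, h2, h3⟩
    rcases Fin.eq_zero_or_eq_succ i with rfl | ⟨i, rfl⟩ <;>
      rcases Fin.eq_zero_or_eq_succ j with rfl | ⟨j, rfl⟩ <;>
      rcases Fin.eq_zero_or_eq_succ k with rfl | ⟨k, rfl⟩ <;>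
      rcases Fin.eq_zero_or_eq_succ l with rfl | ⟨l, rfl⟩ <;>
      simp_all [ins0, Fin.succ_lt_succ_iff, Fin.castSucc_lt_castSucc_iff] <;>
      exact ⟨i, j, k, l, hij, hjk, hkl, h1, h2, h3⟩
  · rintro ⟨i, j, k, l, hij, hjk, hkl, h1, h2, h3⟩
    exact ⟨i.succ, j.succ, k.succ, l.succ, by simpa [Fin.succ_lt_succ_iff],
      by simpa [Fin.succ_lt_succ_iff], by simpa [Fin.succ_lt_succ_iff],
      by simpa [ins0, Fin.castSucc_lt_castSucc_iff],
      by simpa [ins0, Fin.castSucc_lt_castSucc_iff],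
      by simpa [ins0, Fin.castSucc_lt_castSucc_iff]⟩

lemma pat123_ins1_iff : Pat123 (ins1 σ) ↔ Pat123 σ := by
  constructor
  · rintro ⟨i, j, k, hij, hjk, h1, h2⟩
    rcases Fin.eq_zero_or_eq_succ i with rfl | ⟨i, rfl⟩ <;>
      rcases Fin.eq_zero_or_eq_succ j with rfl | ⟨j, rfl⟩ <;>
      rcases Fin.eq_zero_or_eq_succ k with rfl | ⟨k, rfl⟩ <;>
      (try rcases Fin.eq_zero_or_eq_succ i with rfl | ⟨i, rfl⟩) <;>
      (try rcases Fin.eq_zero_or_eq_succ j with rfl | ⟨j, rfl⟩) <;>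
      (try rcases Fin.eq_zero_or_eq_succ k with rfl | ⟨k, rfl⟩) <;>
      simp_all [ins1, Fin.succ_lt_succ_iff, Fin.castSucc_lt_castSucc_iff,
        Fin.castSucc_lt_last, Fin.succ_ne_zero] <;>
      first
        | exact ⟨0, j.succ, k.succ, Fin.succ_pos _, Fin.succ_lt_succ_iff.mpr hjk, h1, h2⟩
        | exact ⟨i.succ, j.succ, k.succ, Fin.succ_lt_succ_iff.mpr hij,
            Fin.succ_lt_succ_iff.mpr hjk, h1, h2⟩
  · rintro ⟨i, j, k, hij, hjk, h1, h2⟩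
    exact ⟨g1 i, g1 j, g1 k, g1_lt hij, g1_lt hjk,
      by simpa [ins1_g1, Fin.castSucc_lt_castSucc_iff],
      by simpa [ins1_g1, Fin.castSucc_lt_castSucc_iff]⟩

lemma pat3214_ins1_iff : Pat3214 (ins1 σ) ↔ Pat3214 σ := by
  constructor
  · rintro ⟨i, j, k, l, hij, hjk, hkl, h1, h2, h3⟩
    rcases Fin.eq_zero_or_eq_succ i with rfl | ⟨i, rfl⟩ <;>
      rcases Fin.eq_zero_or_eq_succ j with rfl | ⟨j, rfl⟩ <;>
      rcases Fin.eq_zero_or_eq_succ k with rfl | ⟨k, rfl⟩ <;>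
      rcases Fin.eq_zero_or_eq_succ l with rfl | ⟨l, rfl⟩ <;>
      (try rcases Fin.eq_zero_or_eq_succ i with rfl | ⟨i, rfl⟩) <;>
      (try rcases Fin.eq_zero_or_eq_succ j with rfl | ⟨j, rfl⟩) <;>
      (try rcases Fin.eq_zero_or_eq_succ k with rfl | ⟨k, rfl⟩) <;>
      (try rcases Fin.eq_zero_or_eq_succ l with rfl | ⟨l, rfl⟩) <;>
      simp_all [ins1, Fin.succ_lt_succ_iff, Fin.castSucc_lt_castSucc_iff,
        Fin.castSucc_lt_last, Fin.succ_ne_zero] <;>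
      first
        | exact ⟨0, j.succ, k.succ, l.succ, Fin.succ_pos _, Fin.succ_lt_succ_iff.mpr hjk,
            Fin.succ_lt_succ_iff.mpr hkl, h1, h2, h3⟩
        | exact ⟨i.succ, j.succ, k.succ, l.succ, Fin.succ_lt_succ_iff.mpr hij,
            Fin.succ_lt_succ_iff.mpr hjk, Fin.succ_lt_succ_iff.mpr hkl, h1, h2, h3⟩
  · rintro ⟨i, j, k, l, hij, hjk, hkl, h1, h2, h3⟩
    exact ⟨g1 i, g1 j, g1 k, g1 l, g1_lt hij, g1_lt hjk, g1_lt hkl,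
      by simpa [ins1_g1, Fin.castSucc_lt_castSucc_iff],
      by simpa [ins1_g1, Fin.castSucc_lt_castSucc_iff],
      by simpa [ins1_g1, Fin.castSucc_lt_castSucc_iff]⟩

lemma pat2143_ins1_iff : Pat2143 (ins1 σ) ↔ Pat2143 σ := by
  constructor
  · rintro ⟨i, j, k, l, hij, hjk, hkl, h1, h2, h3⟩
    rcases Fin.eq_zero_or_eq_succ i with rfl | ⟨i, rfl⟩ <;>
      rcases Fin.eq_zero_or_eq_succ j with rfl | ⟨j, rfl⟩ <;>
      rcases Fin.eq_zero_or_eq_succ k with rfl | ⟨k, rfl⟩ <;>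
      rcases Fin.eq_zero_or_eq_succ l with rfl | ⟨l, rfl⟩ <;>
      (try rcases Fin.eq_zero_or_eq_succ i with rfl | ⟨i, rfl⟩) <;>
      (try rcases Fin.eq_zero_or_eq_succ j with rfl | ⟨j, rfl⟩) <;>
      (try rcases Fin.eq_zero_or_eq_succ k with rfl | ⟨k, rfl⟩) <;>
      (try rcases Fin.eq_zero_or_eq_succ l with rfl | ⟨l, rfl⟩) <;>
      simp_all [ins1, Fin.succ_lt_succ_iff, Fin.castSucc_lt_castSucc_iff,
        Fin.castSucc_lt_last, Fin.succ_ne_zero] <;>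
      first
        | exact ⟨0, j.succ, k.succ, l.succ, Fin.succ_pos _, Fin.succ_lt_succ_iff.mpr hjk,
            Fin.succ_lt_succ_iff.mpr hkl, h1, h2, h3⟩
        | exact ⟨i.succ, j.succ, k.succ, l.succ, Fin.succ_lt_succ_iff.mpr hij,
            Fin.succ_lt_succ_iff.mpr hjk, Fin.succ_lt_succ_iff.mpr hkl, h1, h2, h3⟩
  · rintro ⟨i, j, k, l, hij, hjk, hkl, h1, h2, h3⟩
    exact ⟨g1 i, g1 j, g1 k, g1 l, g1_lt hij, g1_lt hjk, g1_lt hkl,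
      by simpa [ins1_g1, Fin.castSucc_lt_castSucc_iff],
      by simpa [ins1_g1, Fin.castSucc_lt_castSucc_iff],
      by simpa [ins1_g1, Fin.castSucc_lt_castSucc_iff]⟩

lemma pat123_ins2_iff : Pat123 (ins2 τ) ↔ Pat123 τ := by
  constructor
  · rintro ⟨i, j, k, hij, hjk, h1, h2⟩
    rcases Fin.eq_zero_or_eq_succ i with rfl | ⟨i, rfl⟩ <;>
      rcases Fin.eq_zero_or_eq_succ j with rfl | ⟨j, rfl⟩ <;>
      rcases Fin.eq_zero_or_eq_succ k with rfl | ⟨k, rfl⟩ <;>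
      (try rcases Fin.eq_zero_or_eq_succ i with rfl | ⟨i, rfl⟩) <;>
      (try rcases Fin.eq_zero_or_eq_succ j with rfl | ⟨j, rfl⟩) <;>
      (try rcases Fin.eq_zero_or_eq_succ k with rfl | ⟨k, rfl⟩) <;>
      (try rcases Fin.eq_zero_or_eq_succ i with rfl | ⟨i, rfl⟩) <;>
      (try rcases Fin.eq_zero_or_eq_succ j with rfl | ⟨j, rfl⟩) <;>
      (try rcases Fin.eq_zero_or_eq_succ k with rfl | ⟨k, rfl⟩) <;>
      simp_all [ins2, Fin.succ_lt_succ_iff, Fin.castSucc_lt_castSucc_iff,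
        Fin.castSucc_lt_last, Fin.succ_ne_zero] <;>
      first
        | exact ⟨0, j.succ, k.succ, Fin.succ_pos _, Fin.succ_lt_succ_iff.mpr hjk, h1, h2⟩
        | exact ⟨i.succ, j.succ, k.succ, Fin.succ_lt_succ_iff.mpr hij,
            Fin.succ_lt_succ_iff.mpr hjk, h1, h2⟩
  · rintro ⟨i, j, k, hij, hjk, h1, h2⟩
    exact ⟨g2 i, g2 j, g2 k, g2_lt hij, g2_lt hjk,
      by simpa [ins2_g2, Fin.castSucc_lt_castSucc_iff],
      by simpa [ins2_g2, Fin.castSucc_lt_castSucc_iff]⟩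

lemma pat3214_ins2_iff : Pat3214 (ins2 τ) ↔ Pat3214 τ := by
  constructor
  · rintro ⟨i, j, k, l, hij, hjk, hkl, h1, h2, h3⟩
    rcases Fin.eq_zero_or_eq_succ i with rfl | ⟨i, rfl⟩ <;>
      rcases Fin.eq_zero_or_eq_succ j with rfl | ⟨j, rfl⟩ <;>
      rcases Fin.eq_zero_or_eq_succ k with rfl | ⟨k, rfl⟩ <;>
      rcases Fin.eq_zero_or_eq_succ l with rfl | ⟨l, rfl⟩ <;>
      (try rcases Fin.eq_zero_or_eq_succ i with rfl | ⟨i, rfl⟩) <;>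
      (try rcases Fin.eq_zero_or_eq_succ j with rfl | ⟨j, rfl⟩) <;>
      (try rcases Fin.eq_zero_or_eq_succ k with rfl | ⟨k, rfl⟩) <;>
      (try rcases Fin.eq_zero_or_eq_succ l with rfl | ⟨l, rfl⟩) <;>
      (try rcases Fin.eq_zero_or_eq_succ i with rfl | ⟨i, rfl⟩) <;>
      (try rcases Fin.eq_zero_or_eq_succ j with rfl | ⟨j, rfl⟩) <;>
      (try rcases Fin.eq_zero_or_eq_succ k with rfl | ⟨k, rfl⟩) <;>
      (try rcases Fin.eq_zero_or_eq_succ l with rfl | ⟨l, rfl⟩) <;>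
      simp_all [ins2, Fin.succ_lt_succ_iff, Fin.castSucc_lt_castSucc_iff,
        Fin.castSucc_lt_last, Fin.succ_ne_zero] <;>
      first
        | exact ⟨0, j.succ, k.succ, l.succ, Fin.succ_pos _, Fin.succ_lt_succ_iff.mpr hjk,
            Fin.succ_lt_succ_iff.mpr hkl, h1, h2, h3⟩
        | exact ⟨i.succ, j.succ, k.succ, l.succ, Fin.succ_lt_succ_iff.mpr hij,
            Fin.succ_lt_succ_iff.mpr hjk, Fin.succ_lt_succ_iff.mpr hkl, h1, h2, h3⟩
  · rintro ⟨i, j, k, l, hij, hjk, hkl, h1, h2, h3⟩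
    exact ⟨g2 i, g2 j, g2 k, g2 l, g2_lt hij, g2_lt hjk, g2_lt hkl,
      by simpa [ins2_g2, Fin.castSucc_lt_castSucc_iff],
      by simpa [ins2_g2, Fin.castSucc_lt_castSucc_iff],
      by simpa [ins2_g2, Fin.castSucc_lt_castSucc_iff]⟩

lemma pat2143_ins2_iff : Pat2143 (ins2 τ) ↔ Pat2143 τ := by
  constructor
  · rintro ⟨i, j, k, l, hij, hjk, hkl, h1, h2, h3⟩
    rcases Fin.eq_zero_or_eq_succ i with rfl | ⟨i, rfl⟩ <;>
      rcases Fin.eq_zero_or_eq_succ j with rfl | ⟨j, rfl⟩ <;>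
      rcases Fin.eq_zero_or_eq_succ k with rfl | ⟨k, rfl⟩ <;>
      rcases Fin.eq_zero_or_eq_succ l with rfl | ⟨l, rfl⟩ <;>
      (try rcases Fin.eq_zero_or_eq_succ i with rfl | ⟨i, rfl⟩) <;>
      (try rcases Fin.eq_zero_or_eq_succ j with rfl | ⟨j, rfl⟩) <;>
      (try rcases Fin.eq_zero_or_eq_succ k with rfl | ⟨k, rfl⟩) <;>
      (try rcases Fin.eq_zero_or_eq_succ l with rfl | ⟨l, rfl⟩) <;>
      (try rcases Fin.eq_zero_or_eq_succ i with rfl | ⟨i, rfl⟩) <;>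
      (try rcases Fin.eq_zero_or_eq_succ j with rfl | ⟨j, rfl⟩) <;>
      (try rcases Fin.eq_zero_or_eq_succ k with rfl | ⟨k, rfl⟩) <;>
      (try rcases Fin.eq_zero_or_eq_succ l with rfl | ⟨l, rfl⟩) <;>
      simp_all [ins2, Fin.succ_lt_succ_iff, Fin.castSucc_lt_castSucc_iff,
        Fin.castSucc_lt_last, Fin.succ_ne_zero] <;>
      first
        | exact ⟨0, j.succ, k.succ, l.succ, Fin.succ_pos _, Fin.succ_lt_succ_iff.mpr hjk,
            Fin.succ_lt_succ_iff.mpr hkl, h1, h2, h3⟩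
        | exact ⟨i.succ, j.succ, k.succ, l.succ, Fin.succ_lt_succ_iff.mpr hij,
            Fin.succ_lt_succ_iff.mpr hjk, Fin.succ_lt_succ_iff.mpr hkl, h1, h2, h3⟩
  · rintro ⟨i, j, k, l, hij, hjk, hkl, h1, h2, h3⟩
    exact ⟨g2 i, g2 j, g2 k, g2 l, g2_lt hij, g2_lt hjk, g2_lt hkl,
      by simpa [ins2_g2, Fin.castSucc_lt_castSucc_iff],
      by simpa [ins2_g2, Fin.castSucc_lt_castSucc_iff],
      by simpa [ins2_g2, Fin.castSucc_lt_castSucc_iff]⟩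

lemma av_ins0 : Av (ins0 σ) ↔ Av σ := by
  unfold Av
  rw [pat123_ins0_iff, pat3214_ins0_iff, pat2143_ins0_iff]

lemma av_ins1 : Av (ins1 σ) ↔ Av σ := by
  unfold Av
  rw [pat123_ins1_iff, pat3214_ins1_iff, pat2143_ins1_iff]

lemma av_ins2 : Av (ins2 τ) ↔ Av τ := by
  unfold Av
  rw [pat123_ins2_iff, pat3214_ins2_iff, pat2143_ins2_iff]

end PatIff



section Bij
variable {σ : Fin (m+2) → Fin (m+2)} {τ : Fin (m+1) → Fin (m+1)}

lemma injective_ins0 (h : Function.Injective σ) : Function.Injective (ins0 σ) := by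
  intro a b hab
  rcases Fin.eq_zero_or_eq_succ a with rfl | ⟨a, rfl⟩ <;>
    rcases Fin.eq_zero_or_eq_succ b with rfl | ⟨b, rfl⟩ <;>
    simp_all [ins0, Fin.castSucc_inj, Fin.succ_inj]
  exact h hab

lemma injective_ins1 (h : Function.Injective σ) : Function.Injective (ins1 σ) := by
  intro a b hab
  rcases Fin.eq_zero_or_eq_succ a with rfl | ⟨a, rfl⟩ <;>
    rcases Fin.eq_zero_or_eq_succ b with rfl | ⟨b, rfl⟩ <;>
    (try rcases Fin.eq_zero_or_eq_succ a with rfl | ⟨a, rfl⟩) <;>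
    (try rcases Fin.eq_zero_or_eq_succ b with rfl | ⟨b, rfl⟩) <;>
    simp_all [ins1, Fin.castSucc_inj, Fin.succ_inj] <;>
    first
      | rfl
      | exact absurd (h hab).symm (Fin.succ_ne_zero _)
      | exact absurd (h hab) (Fin.succ_ne_zero _)
      | exact Fin.succ_inj.mp (h hab)
      | exact h hab

lemma injective_ins2 (h : Function.Injective τ) : Function.Injective (ins2 τ) := by
  intro a b hab
  rcases Fin.eq_zero_or_eq_succ a with rfl | ⟨a, rfl⟩ <;>
    rcases Fin.eq_zero_or_eq_succ b with rfl | ⟨b, rfl⟩ <;>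
    (try rcases Fin.eq_zero_or_eq_succ a with rfl | ⟨a, rfl⟩) <;>
    (try rcases Fin.eq_zero_or_eq_succ b with rfl | ⟨b, rfl⟩) <;>
    (try rcases Fin.eq_zero_or_eq_succ a with rfl | ⟨a, rfl⟩) <;>
    (try rcases Fin.eq_zero_or_eq_succ b with rfl | ⟨b, rfl⟩) <;>
    simp_all [ins2, Fin.castSucc_inj, Fin.succ_inj] <;>
    first
      | rfl
      | exact absurd (h hab).symm (Fin.succ_ne_zero _)
      | exact absurd (h hab) (Fin.succ_ne_zero _)
      | exact Fin.succ_inj.mp (h hab)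
      | exact h hab

lemma bijective_ins0 (h : Function.Bijective σ) : Function.Bijective (ins0 σ) :=
  Finite.injective_iff_bijective.mp (injective_ins0 h.injective)

lemma bijective_ins1 (h : Function.Bijective σ) : Function.Bijective (ins1 σ) :=
  Finite.injective_iff_bijective.mp (injective_ins1 h.injective)

lemma bijective_ins2 (h : Function.Bijective τ) : Function.Bijective (ins2 τ) :=
  Finite.injective_iff_bijective.mp (injective_ins2 h.injective)

end Bij

def dropTop (x : Fin (m+3)) : Fin (m+2) := if h : x.val < m+2 then ⟨x.val, h⟩ else 0

def dropTop2 (x : Fin (m+3)) : Fin (m+1) := if h : x.val < m+1 then ⟨x.val, h⟩ else 0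

lemma castSucc_dropTop (x : Fin (m+3)) (hx : x ≠ Fin.last (m+2)) :
    (dropTop x).castSucc = x := by
  have hv : x.val ≠ m + 2 := fun hh => hx (Fin.ext (by simpa using hh))
  have hlt : x.val < m + 2 := by have := x.isLt; omega
  simp [dropTop, hlt, Fin.ext_iff]

lemma castSucc2_dropTop2 (x : Fin (m+3)) (h2 : x ≠ Fin.last (m+2))
    (h1 : x ≠ (Fin.last (m+1)).castSucc) : (dropTop2 x).castSucc.castSucc = x := by
  have a2 : x.val ≠ m + 2 := fun hh => h2 (Fin.ext (by simpa using hh))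
  have a1 : x.val ≠ m + 1 := fun hh => h1 (Fin.ext (by simpa using hh))
  have hlt : x.val < m + 1 := by have := x.isLt; omega
  simp [dropTop2, hlt, Fin.ext_iff]

def res0 (f : Fin (m+3) → Fin (m+3)) : Fin (m+2) → Fin (m+2) := fun j => dropTop (f j.succ)

def res1 (f : Fin (m+3) → Fin (m+3)) : Fin (m+2) → Fin (m+2) := fun j => dropTop (f (g1 j))

def res2 (f : Fin (m+3) → Fin (m+3)) : Fin (m+1) → Fin (m+1) := fun j => dropTop2 (f (g2 j))

lemma g1_ne_one (a : Fin (m+2)) : g1 a ≠ Fin.succ 0 := by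
  rcases Fin.eq_zero_or_eq_succ a with rfl | ⟨a, rfl⟩
  · simp only [g1, Fin.cases_zero]
    exact (Fin.succ_ne_zero 0).symm
  · simp only [g1, Fin.cases_succ]
    intro hh
    exact Fin.succ_ne_zero a (Fin.succ_inj.mp hh)

lemma g2_ne_zero (a : Fin (m+1)) : g2 a ≠ 0 := by
  rcases Fin.eq_zero_or_eq_succ a with rfl | ⟨a, rfl⟩
  · simp only [g2, Fin.cases_zero]
    exact Fin.succ_ne_zero 0
  · simp only [g2, Fin.cases_succ]
    exact Fin.succ_ne_zero _

lemma g2_ne_two (a : Fin (m+1)) : g2 a ≠ Fin.succ (Fin.succ 0) := by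
  rcases Fin.eq_zero_or_eq_succ a with rfl | ⟨a, rfl⟩
  · simp only [g2, Fin.cases_zero]
    intro hh
    exact absurd (Fin.succ_inj.mp hh) (Fin.succ_ne_zero 0).symm
  · simp only [g2, Fin.cases_succ]
    intro hh
    exact Fin.succ_ne_zero a (Fin.succ_inj.mp (Fin.succ_inj.mp hh))

lemma ins0_res0 (f : Fin (m+3) → Fin (m+3)) (hf0 : f 0 = Fin.last (m+2))
    (hinj : Function.Injective f) : ins0 (res0 f) = f := by
  funext i
  rcases Fin.eq_zero_or_eq_succ i with rfl | ⟨i, rfl⟩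
  · simp [ins0, hf0]
  · have hne : f i.succ ≠ Fin.last (m+2) := by
      rw [← hf0]
      exact fun hh => Fin.succ_ne_zero i (hinj hh)
    simp only [ins0, Fin.cons_succ, res0]
    exact castSucc_dropTop _ hne

lemma ins1_res1 (f : Fin (m+3) → Fin (m+3)) (hf1 : f (Fin.succ 0) = Fin.last (m+2))
    (hinj : Function.Injective f) : ins1 (res1 f) = f := by
  have key : ∀ a : Fin (m+2), f (g1 a) ≠ Fin.last (m+2) := by
    intro a hh
    rw [← hf1] at hh
    exact g1_ne_one a (hinj hh)
  funext i
  rcases Fin.eq_zero_or_eq_succ i with rfl | ⟨i, rfl⟩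
  · have : (0 : Fin (m+3)) = g1 0 := by simp [g1]
    simp only [ins1, Fin.cons_zero, res1]
    rw [this]
    exact castSucc_dropTop _ (key 0)
  · rcases Fin.eq_zero_or_eq_succ i with rfl | ⟨i, rfl⟩
    · simp only [ins1, Fin.cons_succ, Fin.cons_zero]
      exact hf1.symm
    · have : i.succ.succ = g1 i.succ := by simp [g1]
      simp only [ins1, Fin.cons_succ, res1]
      rw [this]
      exact castSucc_dropTop _ (key i.succ)

lemma ins2_res2 (f : Fin (m+3) → Fin (m+3))
    (hf2 : f (Fin.succ (Fin.succ 0)) = Fin.last (m+2))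
    (hf0 : f 0 = (Fin.last (m+1)).castSucc)
    (hinj : Function.Injective f) : ins2 (res2 f) = f := by
  have key : ∀ a : Fin (m+1), (dropTop2 (f (g2 a))).castSucc.castSucc = f (g2 a) := by
    intro a
    refine castSucc2_dropTop2 _ (fun hh => ?_) (fun hh => ?_)
    · rw [← hf2] at hh
      exact g2_ne_two a (hinj hh)
    · rw [← hf0] at hh
      exact g2_ne_zero a (hinj hh)
  funext i
  rcases Fin.eq_zero_or_eq_succ i with rfl | ⟨i, rfl⟩
  · simp [ins2, hf0]
  · rcases Fin.eq_zero_or_eq_succ i with rfl | ⟨i, rfl⟩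
    · have h01 : Fin.succ (0 : Fin (m+2)) = g2 (0 : Fin (m+1)) := by simp [g2]
      simp only [ins2, Fin.cons_succ, Fin.cons_zero, res2]
      rw [h01]
      exact key 0
    · rcases Fin.eq_zero_or_eq_succ i with rfl | ⟨i, rfl⟩
      · simp only [ins2, Fin.cons_succ, Fin.cons_zero]
        exact hf2.symm
      · have : i.succ.succ.succ = g2 i.succ := by simp [g2]
        simp only [ins2, Fin.cons_succ, res2]
        rw [this]
        exact key i.succ


def ASet (n : ℕ) : Set (Fin n → Fin n) := {f | Function.Bijective f ∧ Av f}

lemma val_lt_of_ne {x : Fin (m+3)} (h2 : x ≠ Fin.last (m+2))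
    (h1 : x ≠ (Fin.last (m+1)).castSucc) : x.val < m + 1 := by
  have a2 : x.val ≠ m + 2 := fun hh => h2 (Fin.ext (by simpa using hh))
  have a1 : x.val ≠ m + 1 := fun hh => h1 (Fin.ext (by simpa using hh))
  have := x.isLt
  omega

lemma pos_last (f : Fin (m+3) → Fin (m+3)) (hf : f ∈ ASet (m+3)) :
    f 0 = Fin.last (m+2) ∨ f (Fin.succ 0) = Fin.last (m+2) ∨
      (f (Fin.succ (Fin.succ 0)) = Fin.last (m+2) ∧ f 0 = (Fin.last (m+1)).castSucc) := by
  obtain ⟨hbij, hav⟩ := hf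
  have hinj := hbij.injective
  obtain ⟨p, hp⟩ := hbij.surjective (Fin.last (m+2))
  have hv0 : (0 : Fin (m+3)).val = 0 := rfl
  have hv1 : (Fin.succ (0 : Fin (m+2))).val = 1 := rfl
  have hv2 : (Fin.succ (Fin.succ (0 : Fin (m+1)))).val = 2 := rfl
  have hq01 : (0 : Fin (m+3)) < Fin.succ 0 := by rw [Fin.lt_def]; omega
  have hq12 : (Fin.succ (0 : Fin (m+2))) < Fin.succ (Fin.succ 0) := by rw [Fin.lt_def]; omega
  have hne01 : (0 : Fin (m+3)) ≠ Fin.succ 0 := Fin.ne_of_lt hq01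
  have hne12 : (Fin.succ (0 : Fin (m+2))) ≠ Fin.succ (Fin.succ 0) := Fin.ne_of_lt hq12
  have hne02 : (0 : Fin (m+3)) ≠ Fin.succ (Fin.succ 0) := by
    intro hh; have := congrArg Fin.val hh; omega
  have hval : p.val < 3 := by
    by_contra hc
    push_neg at hc
    have key : ∀ r : Fin (m+3), r.val < 3 → f r < Fin.last (m+2) := by
      intro r hr
      refine Fin.lt_last_iff_ne_last.mpr fun hh => ?_
      have hrp : r = p := hinj (hh.trans hp.symm)
      rw [hrp] at hr
      omega
    have h0p : (0 : Fin (m+3)) < p := by rw [Fin.lt_def]; omega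
    have h1p : (Fin.succ (0 : Fin (m+2))) < p := by rw [Fin.lt_def]; omega
    have h2p : (Fin.succ (Fin.succ (0 : Fin (m+1)))) < p := by rw [Fin.lt_def]; omega
    rcases lt_trichotomy (f 0) (f (Fin.succ 0)) with h01 | h01 | h01
    · exact hav.1 ⟨0, Fin.succ 0, p, hq01, h1p, h01, hp ▸ key _ (by omega)⟩
    · exact absurd (hinj h01) hne01
    · rcases lt_trichotomy (f (Fin.succ 0)) (f (Fin.succ (Fin.succ 0))) with h12 | h12 | h12
      · exact hav.1 ⟨Fin.succ 0, Fin.succ (Fin.succ 0), p, hq12, h2p, h12,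
          hp ▸ key _ (by omega)⟩
      · exact absurd (hinj h12) hne12
      · exact hav.2.1 ⟨0, Fin.succ 0, Fin.succ (Fin.succ 0), p, hq01, hq12, h2p,
          h12, h01, hp ▸ key _ (by omega)⟩
  have hcase : p.val = 0 ∨ p.val = 1 ∨ p.val = 2 := by omega
  rcases hcase with h | h | h
  · left
    rw [show (0 : Fin (m+3)) = p from Fin.ext (by omega)]
    exact hp
  · right; left
    rw [show (Fin.succ (0 : Fin (m+2))) = p from Fin.ext (by omega)]
    exact hp
  · right; right
    have hp2 : f (Fin.succ (Fin.succ 0)) = Fin.last (m+2) := by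
      rw [show (Fin.succ (Fin.succ (0 : Fin (m+1)))) = p from Fin.ext (by omega)]
      exact hp
    refine ⟨hp2, ?_⟩
    obtain ⟨q, hq⟩ := hbij.surjective ((Fin.last (m+1)).castSucc)
    have hqq2 : q ≠ Fin.succ (Fin.succ 0) := by
      intro hh
      rw [hh, hp2] at hq
      exact (last_eq_castSucc_iff _).mp hq
    have hfq0_ne_last : f 0 ≠ Fin.last (m+2) := by
      intro hh
      exact hne02 (hinj (hh.trans hp2.symm))
    have hfq1_ne_last : f (Fin.succ 0) ≠ Fin.last (m+2) := by
      intro hh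
      exact hne12 (hinj (hh.trans hp2.symm))
    have hq0 : q = 0 := by
      by_contra hc
      have hfq0_ne_sl : f 0 ≠ (Fin.last (m+1)).castSucc := by
        intro hh
        exact hc (hinj (hq.trans hh.symm))
      have h10 : f (Fin.succ 0) < f 0 := by
        rcases lt_trichotomy (f 0) (f (Fin.succ 0)) with hh | hh | hh
        · exact absurd ⟨0, Fin.succ 0, Fin.succ (Fin.succ 0), hq01, hq12, hh,
            hp2 ▸ Fin.lt_last_iff_ne_last.mpr hfq1_ne_last⟩ hav.1
        · exact absurd (hinj hh) hne01
        · exact hh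
      have hqv : q.val = 1 ∨ 3 ≤ q.val := by
        have := q.isLt
        have hv2' : q.val ≠ 2 := fun hh => hqq2 (Fin.ext (by omega))
        have hv0' : q.val ≠ 0 := fun hh => hc (Fin.ext (by omega))
        omega
      rcases hqv with h1v | h3v
      · have hqq1 : q = Fin.succ 0 := Fin.ext (by omega)
        have hlt : f 0 < (Fin.last (m+1)).castSucc := by
          rw [Fin.lt_def]
          have := val_lt_of_ne hfq0_ne_last hfq0_ne_sl
          simpa using this
        rw [← hq, hqq1] at hlt
        exact absurd hlt (lt_asymm h10)
      · have hq2q : Fin.succ (Fin.succ (0 : Fin (m+1))) < q := by rw [Fin.lt_def]; omega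
        refine absurd ⟨0, Fin.succ 0, Fin.succ (Fin.succ 0), q, hq01, hq12, hq2q,
          h10, ?_, ?_⟩ hav.2.2
        · rw [hq, Fin.lt_def]
          have := val_lt_of_ne hfq0_ne_last hfq0_ne_sl
          simpa using this
        · rw [hq, hp2]
          exact Fin.castSucc_lt_last _
    rw [← hq0]
    exact hq

lemma g1_strictMono : StrictMono (g1 : Fin (m+2) → Fin (m+3)) := fun _ _ h => g1_lt h

lemma g2_strictMono : StrictMono (g2 : Fin (m+1) → Fin (m+3)) := fun _ _ h => g2_lt h

lemma injective_res0 (f : Fin (m+3) → Fin (m+3)) (hf0 : f 0 = Fin.last (m+2))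
    (hinj : Function.Injective f) : Function.Injective (res0 f) := by
  have hne : ∀ c : Fin (m+2), f c.succ ≠ Fin.last (m+2) := fun c hh =>
    Fin.succ_ne_zero c (hinj (hh.trans hf0.symm))
  intro a b hab
  have h := congrArg Fin.castSucc hab
  simp only [res0] at h
  rw [castSucc_dropTop _ (hne a), castSucc_dropTop _ (hne b)] at h
  exact Fin.succ_inj.mp (hinj h)

lemma injective_res1 (f : Fin (m+3) → Fin (m+3)) (hf1 : f (Fin.succ 0) = Fin.last (m+2))
    (hinj : Function.Injective f) : Function.Injective (res1 f) := by
  have hne : ∀ c : Fin (m+2), f (g1 c) ≠ Fin.last (m+2) := fun c hh =>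
    g1_ne_one c (hinj (hh.trans hf1.symm))
  intro a b hab
  have h := congrArg Fin.castSucc hab
  simp only [res1] at h
  rw [castSucc_dropTop _ (hne a), castSucc_dropTop _ (hne b)] at h
  exact g1_strictMono.injective (hinj h)

lemma injective_res2 (f : Fin (m+3) → Fin (m+3))
    (hf2 : f (Fin.succ (Fin.succ 0)) = Fin.last (m+2))
    (hf0 : f 0 = (Fin.last (m+1)).castSucc)
    (hinj : Function.Injective f) : Function.Injective (res2 f) := by
  have hne : ∀ c : Fin (m+1), f (g2 c) ≠ Fin.last (m+2) := fun c hh =>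
    g2_ne_two c (hinj (hh.trans hf2.symm))
  have hne' : ∀ c : Fin (m+1), f (g2 c) ≠ (Fin.last (m+1)).castSucc := fun c hh =>
    g2_ne_zero c (hinj (hh.trans hf0.symm))
  intro a b hab
  have h := congrArg (fun x : Fin (m+2) => x.castSucc) (congrArg Fin.castSucc hab)
  simp only [res2] at h
  rw [castSucc2_dropTop2 _ (hne a) (hne' a), castSucc2_dropTop2 _ (hne b) (hne' b)] at h
  exact g2_strictMono.injective (hinj h)

lemma ASet_eq : ASet (m+3) =
    ins0 '' ASet (m+2) ∪ ins1 '' ASet (m+2) ∪ ins2 '' ASet (m+1) := by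
  apply Set.Subset.antisymm
  · intro f hf
    rcases pos_last f hf with h | h | ⟨h2, h0⟩
    · refine Or.inl (Or.inl ⟨res0 f, ⟨?_, ?_⟩, ins0_res0 f h hf.1.injective⟩)
      · exact Finite.injective_iff_bijective.mp (injective_res0 f h hf.1.injective)
      · refine (av_ins0 (res0 f)).mp ?_
        rw [ins0_res0 f h hf.1.injective]
        exact hf.2
    · refine Or.inl (Or.inr ⟨res1 f, ⟨?_, ?_⟩, ins1_res1 f h hf.1.injective⟩)
      · exact Finite.injective_iff_bijective.mp (injective_res1 f h hf.1.injective)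
      · refine (av_ins1 (res1 f)).mp ?_
        rw [ins1_res1 f h hf.1.injective]
        exact hf.2
    · refine Or.inr ⟨res2 f, ⟨?_, ?_⟩, ins2_res2 f h2 h0 hf.1.injective⟩
      · exact Finite.injective_iff_bijective.mp (injective_res2 f h2 h0 hf.1.injective)
      · refine (av_ins2 (res2 f)).mp ?_
        rw [ins2_res2 f h2 h0 hf.1.injective]
        exact hf.2
  · rintro f ((⟨σ, hσ, rfl⟩ | ⟨σ, hσ, rfl⟩) | ⟨τ, hτ, rfl⟩)
    · exact ⟨bijective_ins0 hσ.1, (av_ins0 σ).mpr hσ.2⟩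
    · exact ⟨bijective_ins1 hσ.1, (av_ins1 σ).mpr hσ.2⟩
    · exact ⟨bijective_ins2 hτ.1, (av_ins2 τ).mpr hτ.2⟩

lemma ins0_left_injective : Function.Injective (ins0 (m := m)) := by
  intro σ τ h
  funext j
  have := congrFun h j.succ
  simpa [ins0, Fin.castSucc_inj] using this

lemma ins1_left_injective : Function.Injective (ins1 (m := m)) := by
  intro σ τ h
  funext j
  rcases Fin.eq_zero_or_eq_succ j with rfl | ⟨j, rfl⟩
  · have := congrFun h 0
    simpa [ins1, Fin.castSucc_inj] using this
  · have := congrFun h j.succ.succ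
    simpa [ins1, Fin.castSucc_inj] using this

lemma ins2_left_injective : Function.Injective (ins2 (m := m)) := by
  intro σ τ h
  funext j
  rcases Fin.eq_zero_or_eq_succ j with rfl | ⟨j, rfl⟩
  · have := congrFun h (Fin.succ 0)
    simpa [ins2, Fin.castSucc_inj] using this
  · have := congrFun h j.succ.succ.succ
    simpa [ins2, Fin.castSucc_inj] using this

lemma disj01 : Disjoint (ins0 '' ASet (m+2)) (ins1 '' ASet (m+2)) := by
  rw [Set.disjoint_left]
  rintro f ⟨σ, _, rfl⟩ ⟨τ, _, hτ⟩
  have := congrFun hτ 0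
  simp [ins0, ins1] at this

lemma disj02 : Disjoint (ins0 '' ASet (m+2)) (ins2 '' ASet (m+1)) := by
  rw [Set.disjoint_left]
  rintro f ⟨σ, _, rfl⟩ ⟨τ, _, hτ⟩
  have := congrFun hτ 0
  simp [ins0, ins2] at this

lemma disj12 : Disjoint (ins1 '' ASet (m+2)) (ins2 '' ASet (m+1)) := by
  rw [Set.disjoint_left]
  rintro f ⟨σ, _, rfl⟩ ⟨τ, _, hτ⟩
  have := congrFun hτ (Fin.succ 0)
  simp [ins1, ins2] at this

lemma ncard_ASet_step :
    (ASet (m+3)).ncard = 2 * (ASet (m+2)).ncard + (ASet (m+1)).ncard := by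
  rw [ASet_eq]
  rw [Set.ncard_union_eq (Set.disjoint_union_left.mpr ⟨disj02, disj12⟩)
      (Set.toFinite _) (Set.toFinite _),
    Set.ncard_union_eq disj01 (Set.toFinite _) (Set.toFinite _),
    Set.ncard_image_of_injective _ ins0_left_injective,
    Set.ncard_image_of_injective _ ins1_left_injective,
    Set.ncard_image_of_injective _ ins2_left_injective]
  ring


lemma tCount_eq (n : ℕ) :
    {ρ : PermSeq | ρ.1 = n ∧ AvoidsAll {p123, p3214, p2143} ρ}.ncard
      = (ASet n).ncard := by
  have step1 : {ρ : PermSeq | ρ.1 = n ∧ AvoidsAll {p123, p3214, p2143} ρ}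
      = (fun σ : Equiv.Perm (Fin n) => (⟨n, σ⟩ : PermSeq)) '' {σ | Av ⇑σ} := by
    ext ρ
    constructor
    · rintro ⟨h1, h2⟩
      obtain ⟨nn, σ⟩ := ρ
      simp only at h1
      subst h1
      exact ⟨σ, (avoidsAll_iff σ).mp h2, rfl⟩
    · rintro ⟨σ, hσ, rfl⟩
      exact ⟨rfl, (avoidsAll_iff σ).mpr hσ⟩
  have step2 : ASet n = (fun σ : Equiv.Perm (Fin n) => ⇑σ) '' {σ | Av ⇑σ} := by
    ext f
    constructor
    · intro hf
      exact ⟨Equiv.ofBijective f hf.1, hf.2, rfl⟩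
    · rintro ⟨σ, hσ, rfl⟩
      exact ⟨σ.bijective, hσ⟩
  rw [step1, step2]
  exact (Set.ncard_image_of_injective _ (fun a b h => sigma_mk_injective h)).trans
    (Set.ncard_image_of_injective _ (DFunLike.coe_injective)).symm

lemma av_small {n : ℕ} (hn : n ≤ 2) (f : Fin n → Fin n) : Av f := by
  refine ⟨?_, ?_, ?_⟩
  · rintro ⟨i, j, k, hij, hjk, -, -⟩
    rw [Fin.lt_def] at hij hjk
    have := k.isLt
    omega
  · rintro ⟨i, j, k, l, hij, hjk, hkl, -⟩
    rw [Fin.lt_def] at hij hjk hkl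
    have := l.isLt
    omega
  · rintro ⟨i, j, k, l, hij, hjk, hkl, -⟩
    rw [Fin.lt_def] at hij hjk hkl
    have := l.isLt
    omega

lemma ASet_small {n : ℕ} (hn : n ≤ 2) : ASet n = {f | Function.Bijective f} := by
  ext f
  exact ⟨fun h => h.1, fun h => ⟨h, av_small hn f⟩⟩

lemma ncard_bij (n : ℕ) :
    {f : Fin n → Fin n | Function.Bijective f}.ncard = Nat.factorial (Fintype.card (Fin n)) := by
  have himg : {f : Fin n → Fin n | Function.Bijective f}
      = (fun σ : Equiv.Perm (Fin n) => ⇑σ) '' Set.univ := by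
    ext f
    constructor
    · intro hf
      exact ⟨Equiv.ofBijective f hf, trivial, rfl⟩
    · rintro ⟨σ, -, rfl⟩
      exact σ.bijective
  rw [himg, Set.ncard_image_of_injective _ (DFunLike.coe_injective), Set.ncard_univ,
    Nat.card_eq_fintype_card, Fintype.card_perm]

end AMR

/-- `t_1 = 1`, `t_2 = 2` and `t_n = 2t_{n-1} + t_{n-2}` for `n ≥ 3`. -/
theorem tCount_recurrence :
    tCount 1 = 1 ∧ tCount 2 = 2 ∧
    ∀ n : ℕ, 3 ≤ n → tCount n = 2 * tCount (n - 1) + tCount (n - 2) := by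
  have key : ∀ n : ℕ, tCount n = (AMR.ASet n).ncard := fun n => AMR.tCount_eq n
  refine ⟨?_, ?_, ?_⟩
  · rw [key, AMR.ASet_small (by norm_num), AMR.ncard_bij]
    simp
  · rw [key, AMR.ASet_small (by norm_num), AMR.ncard_bij]
    simp
  · intro n hn
    obtain ⟨k, rfl⟩ : ∃ k, n = k + 3 := ⟨n - 3, by omega⟩
    have e1 : k + 3 - 1 = k + 2 := rfl
    have e2 : k + 3 - 2 = k + 1 := rfl
    rw [e1, e2, key, key, key]
    exact AMR.ncard_ASet_step
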